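/- Let $r > 0$, $\kappa < 0$, $0 < r_j \le r$ with $4r - \kappa - r_j > 0$, and fix a real $c$. Define $W(x) = \int_c^x \left\lceil \lceil s\rfloor^{r/r_j} - \lceil c\rfloor^{r/r_j}\right\rfloor^{(4r-\kappa-r_j)/r} ds$ and $\xi(x) = \lceil x\rfloor^{r/r_j} - \lceil c\rfloor^{r/r_j}$. Then $W(x) \le 2^{1 - r_j/r}\, |\xi(x)|^{(4r-\kappa)/r}$ for all real $x$. -/

import Mathlib

open scoped NNReal

noncomputable def spow (a b : ℝ) : ℝ := Real.sign a * |a| ^ b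

lemma spow_of_nonneg {a : ℝ} (b : ℝ) (ha : 0 ≤ a) (hb : 0 < b) : spow a b = a ^ b := by
  rcases eq_or_lt_of_le ha with h | h
  · simp [spow, ← h, Real.zero_rpow hb.ne']
  · simp [spow, Real.sign_of_pos h, abs_of_pos h]

lemma spow_of_neg {a : ℝ} (b : ℝ) (ha : a < 0) : spow a b = -((-a) ^ b) := by
  simp [spow, Real.sign_of_neg ha, abs_of_neg ha]

lemma abs_spow (a : ℝ) {b : ℝ} (hb : 0 < b) : |spow a b| = |a| ^ b := by
  rcases lt_trichotomy a 0 with h | rfl | h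
  · rw [spow_of_neg b h, abs_neg, abs_of_nonneg (Real.rpow_nonneg (by linarith) b), abs_of_neg h]
  · simp [spow, Real.zero_rpow hb.ne']
  · rw [spow_of_nonneg b h.le hb, abs_of_nonneg (Real.rpow_nonneg h.le b), abs_of_pos h]

lemma spow_mono {b : ℝ} (hb : 0 < b) : Monotone (fun a => spow a b) := by
  intro a a' h
  show spow a b ≤ spow a' b
  rcases le_or_gt 0 a with ha | ha
  · rw [spow_of_nonneg b ha hb, spow_of_nonneg b (ha.trans h) hb]
    exact Real.rpow_le_rpow ha h hb.le
  · rcases le_or_gt 0 a' with ha' | ha'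
    · rw [spow_of_neg b ha, spow_of_nonneg b ha' hb]
      have h1 := Real.rpow_nonneg (by linarith : (0:ℝ) ≤ -a) b
      have h2 := Real.rpow_nonneg ha' b
      linarith
    · rw [spow_of_neg b ha, spow_of_neg b ha', neg_le_neg_iff]
      exact Real.rpow_le_rpow (by linarith) (by linarith) hb.le

lemma spow_spow (a : ℝ) {b : ℝ} (hb : 0 < b) : spow (spow a b) (1 / b) = a := by
  rcases lt_trichotomy a 0 with h | rfl | h
  · have hneg : spow a b < 0 := by
      rw [spow_of_neg b h]
      simpa using Real.rpow_pos_of_pos (by linarith) b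
    rw [spow_of_neg _ hneg, spow_of_neg b h, neg_neg,
      ← Real.rpow_mul (by linarith : (0:ℝ) ≤ -a), mul_one_div, div_self hb.ne',
      Real.rpow_one, neg_neg]
  · simp [spow]
  · have hp : 0 < spow a b := by rw [spow_of_nonneg b h.le hb]; exact Real.rpow_pos_of_pos h b
    rw [spow_of_nonneg _ hp.le (by positivity), spow_of_nonneg b h.le hb,
      ← Real.rpow_mul h.le, mul_one_div, div_self hb.ne', Real.rpow_one]

lemma rpow_subadd {a b p : ℝ} (ha : 0 ≤ a) (hb : 0 ≤ b) (hp0 : 0 ≤ p) (hp1 : p ≤ 1) :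
    (a + b) ^ p ≤ a ^ p + b ^ p := by
  lift a to ℝ≥0 using ha
  lift b to ℝ≥0 using hb
  have h := NNReal.coe_le_coe.2 (NNReal.rpow_add_le_add_rpow a b hp0 hp1)
  push_cast [NNReal.coe_rpow] at h
  exact h

lemma rpow_add_le_two_rpow {a b p : ℝ} (ha : 0 ≤ a) (hb : 0 ≤ b) (hp0 : 0 < p) (hp1 : p ≤ 1) :
    a ^ p + b ^ p ≤ 2 ^ (1 - p) * (a + b) ^ p := by
  have hq : 1 ≤ 1 / p := (le_div_iff₀ hp0).2 (by linarith)
  lift a to ℝ≥0 using ha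
  lift b to ℝ≥0 using hb
  have h := NNReal.rpow_arith_mean_le_arith_mean2_rpow (1/2) (1/2)
      (a ^ p) (b ^ p) (add_halves 1) hq
  have hA : ((a : ℝ≥0) ^ p) ^ ((1:ℝ)/p) = a := by
    rw [← NNReal.rpow_mul, mul_one_div, div_self hp0.ne', NNReal.rpow_one]
  have hB : ((b : ℝ≥0) ^ p) ^ ((1:ℝ)/p) = b := by
    rw [← NNReal.rpow_mul, mul_one_div, div_self hp0.ne', NNReal.rpow_one]
  rw [hA, hB] at h
  have h2 := NNReal.rpow_le_rpow h hp0.le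
  rw [← NNReal.rpow_mul, one_div_mul_cancel hp0.ne', NNReal.rpow_one] at h2
  have h3 := NNReal.coe_le_coe.2 h2
  push_cast [NNReal.coe_rpow] at h3
  -- h3 : (1/2)*a^p + (1/2)*b^p ≤ ((1/2)*a + (1/2)*b)^p  (in ℝ)
  have he : (1/2 : ℝ) * a + (1/2) * b = (a + b) / 2 := by ring
  rw [he, Real.div_rpow (by positivity) (by norm_num)] at h3
  have hsub : (2:ℝ) ^ (1 - p) = 2 / 2 ^ p := by
    rw [Real.rpow_sub (by norm_num : (0:ℝ) < 2), Real.rpow_one]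
  have hpos : (0:ℝ) < 2 ^ p := Real.rpow_pos_of_pos (by norm_num) p
  rw [hsub, div_mul_eq_mul_div, le_div_iff₀ hpos]
  have h4 := mul_le_mul_of_nonneg_right h3 hpos.le
  rw [div_mul_cancel₀ _ hpos.ne'] at h4
  nlinarith [h4]

lemma spow_holder {u v p : ℝ} (hp0 : 0 < p) (hp1 : p ≤ 1) :
    |spow u p - spow v p| ≤ 2 ^ (1 - p) * |u - v| ^ p := by
  have key : ∀ u v : ℝ, v ≤ u → spow u p - spow v p ≤ 2 ^ (1 - p) * (u - v) ^ p := by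
    intro u v huv
    have h2 : (1:ℝ) ≤ 2 ^ (1 - p) := Real.one_le_rpow one_le_two (by linarith)
    rcases le_or_gt 0 v with hv | hv
    · rw [spow_of_nonneg p hv hp0, spow_of_nonneg p (hv.trans huv) hp0]
      have hsub : u ^ p ≤ v ^ p + (u - v) ^ p := by
        have h := rpow_subadd hv (by linarith : (0:ℝ) ≤ u - v) hp0.le hp1
        simpa using h
      have hnn : (0:ℝ) ≤ (u - v) ^ p := Real.rpow_nonneg (by linarith) p
      nlinarith
    · rcases le_or_gt 0 u with hu | hu
      · rw [spow_of_neg p hv, spow_of_nonneg p hu hp0]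
        have h := rpow_add_le_two_rpow hu (by linarith : (0:ℝ) ≤ -v) hp0 hp1
        have he : u + -v = u - v := by ring
        rw [he] at h
        linarith
      · rw [spow_of_neg p hv, spow_of_neg p hu]
        have hsub : (-v) ^ p ≤ (-u) ^ p + (u - v) ^ p := by
          have h := rpow_subadd (by linarith : (0:ℝ) ≤ -u)
            (by linarith : (0:ℝ) ≤ u - v) hp0.le hp1
          have he : -u + (u - v) = -v := by ring
          rwa [he] at h
        have hnn : (0:ℝ) ≤ (u - v) ^ p := Real.rpow_nonneg (by linarith) p
        nlinarith
  rcases le_total v u with h | h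
  · rw [abs_of_nonneg (by linarith [spow_mono hp0 h] : (0:ℝ) ≤ spow u p - spow v p),
      abs_of_nonneg (by linarith : (0:ℝ) ≤ u - v)]
    exact key u v h
  · rw [abs_sub_comm, abs_sub_comm u v,
      abs_of_nonneg (by linarith [spow_mono hp0 h] : (0:ℝ) ≤ spow v p - spow u p),
      abs_of_nonneg (by linarith : (0:ℝ) ≤ v - u)]
    exact key v u h

theorem stmt_18 (r κ rj : ℝ) (hr : 0 < r) (hκ : κ < 0) (hrj : 0 < rj) (hrjr : rj ≤ r)
    (hpow : 0 < 4 * r - κ - rj) (c : ℝ) (W ξ : ℝ → ℝ)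
    (hW : ∀ x, W x = ∫ s in c..x,
        spow (spow s (r / rj) - spow c (r / rj)) ((4 * r - κ - rj) / r))
    (hξ : ∀ x, ξ x = spow x (r / rj) - spow c (r / rj)) :
    ∀ x, W x ≤ 2 ^ (1 - rj / r) * |ξ x| ^ ((4 * r - κ) / r) := by
  intro x
  set q := r / rj with hq
  have hq0 : 0 < q := by positivity
  have hq1 : 1 ≤ q := (le_div_iff₀ hrj).2 (by linarith)
  set p := rj / r with hp
  have hp0 : 0 < p := by positivity
  have hp1 : p ≤ 1 := (div_le_one hr).2 hrjr
  have hqp : 1 / q = p := by rw [hq, hp, one_div_div]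
  set pe := (4 * r - κ - rj) / r with hpe
  have hpe0 : 0 < pe := by positivity
  have hf : ∀ s ∈ Set.uIoc c x, ‖spow (spow s q - spow c q) pe‖ ≤ |ξ x| ^ pe := by
    intro s hs
    rw [Real.norm_eq_abs, abs_spow _ hpe0, hξ x]
    apply Real.rpow_le_rpow (abs_nonneg _) _ hpe0.le
    rcases le_total c x with hcx | hcx
    · rw [Set.uIoc_of_le hcx] at hs
      have h1 : spow c q ≤ spow s q := spow_mono hq0 hs.1.le
      have h2 : spow s q ≤ spow x q := spow_mono hq0 hs.2
      rw [abs_of_nonneg (by linarith), abs_of_nonneg (by linarith)]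
      linarith
    · rw [Set.uIoc_comm, Set.uIoc_of_le hcx] at hs
      have h1 : spow x q ≤ spow s q := spow_mono hq0 hs.1.le
      have h2 : spow s q ≤ spow c q := spow_mono hq0 hs.2
      rw [abs_of_nonpos (by linarith), abs_of_nonpos (by linarith)]
      linarith
  have hint := intervalIntegral.norm_integral_le_of_norm_le_const hf
  rw [Real.norm_eq_abs] at hint
  have hWle : W x ≤ |ξ x| ^ pe * |x - c| := by
    rw [hW x]
    exact (le_abs_self _).trans hint
  have hxc : |x - c| ≤ 2 ^ (1 - p) * |ξ x| ^ p := by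
    calc |x - c| = |spow (spow x q) (1/q) - spow (spow c q) (1/q)| := by
          rw [spow_spow x hq0, spow_spow c hq0]
      _ ≤ 2 ^ (1 - 1/q) * |spow x q - spow c q| ^ (1/q) :=
          spow_holder (by positivity) ((div_le_one hq0).2 hq1)
      _ = 2 ^ (1 - p) * |ξ x| ^ p := by rw [hqp, hξ x]
  calc W x ≤ |ξ x| ^ pe * |x - c| := hWle
    _ ≤ |ξ x| ^ pe * (2 ^ (1 - p) * |ξ x| ^ p) :=
        mul_le_mul_of_nonneg_left hxc (Real.rpow_nonneg (abs_nonneg _) _)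
    _ = 2 ^ (1 - p) * |ξ x| ^ (pe + p) := by
        rw [Real.rpow_add' (abs_nonneg _) (by positivity : (0:ℝ) < pe + p).ne']
        ring
    _ = 2 ^ (1 - p) * |ξ x| ^ ((4 * r - κ) / r) := by
        congr 1
        rw [hpe, hp, ← add_div]
        ring_nf
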